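/- Let $\widetilde{Y}=(V,E,F,\widetilde{\varphi}_2)$ be an abstract van Kampen 2-complex with $k$ abstract relators. For $1\le i\le k$ let $\alpha_i$ be the number of geometric faces labeled by the abstract relator $i$ and let $\eta_i$ be the number of free-to-fill abstract letters of relator $i$. Then $\sum_{i=1}^{k}\alpha_i\eta_i \le |\widetilde{Y}^{(1)}| + \mathrm{Red}(\widetilde{Y})$, where $|\widetilde{Y}^{(1)}|$ is the number of geometric edges and $\mathrm{Red}(\widetilde{Y})$ is the reduction degree. -/
import Mathlib


open Finset

noncomputable section

/-- Lexicographic order on abstract letters `(i, j)`. -/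
def lexLe (a b : ℕ × ℕ) : Prop := a.1 < b.1 ∨ (a.1 = b.1 ∧ a.2 ≤ b.2)

variable {k : ℕ} {E F : Type}

/-- In an abstract van Kampen 2-complex with geometric edges `E`, faces `F`, abstract
relator lengths `L`, face labels `lab` and boundary map `bd` (`bd f j` is the `j`-th
geometric edge of `∂f`), the abstract letter `(i, j)` *decorates* the geometric edge `e`
if some face labeled `i` has `e` as its `j`-th boundary edge. -/
def Decorates (L : Fin k → ℕ) (lab : F → Fin k) (bd : F → ℕ → E)
    (e : E) (i : Fin k) (j : ℕ) : Prop :=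
  j < L i ∧ ∃ f : F, lab f = i ∧ bd f j = e

/-- The abstract letter `(i, j)` is *free-to-fill* if on every geometric edge that it
decorates it is the (lexicographically) minimal decoration. -/
def FreeToFill (L : Fin k → ℕ) (lab : F → Fin k) (bd : F → ℕ → E)
    (i : Fin k) (j : ℕ) : Prop :=
  j < L i ∧ ∀ e : E, Decorates L lab bd e i j →
    ∀ (i' : Fin k) (j' : ℕ), Decorates L lab bd e i' j' → lexLe (i.1, j) (i'.1, j')

/-- If at most one element of `S` has positive value, the sum is at most `1` plus the
sum of the truncated predecessors. -/
lemma sum_le_one_add_sum_pred {α : Type*} [DecidableEq α] (S : Finset α) (g : α → ℕ)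
    (h : ∀ a ∈ S, ∀ b ∈ S, 0 < g a → 0 < g b → a = b) :
    ∑ a ∈ S, g a ≤ 1 + ∑ a ∈ S, (g a - 1) := by
  classical
  set S' := S.filter (fun a => 0 < g a) with hS'
  have hsub : S' ⊆ S := filter_subset _ _
  have h1 : ∑ a ∈ S', g a = ∑ a ∈ S, g a :=
    Finset.sum_filter_of_ne (fun x _ hgx => Nat.pos_of_ne_zero hgx)
  have hcard : S'.card ≤ 1 :=
    Finset.card_le_one.2 (fun a ha b hb =>
      h a (hsub ha) b (hsub hb) (mem_filter.1 ha).2 (mem_filter.1 hb).2)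
  calc ∑ a ∈ S, g a = ∑ a ∈ S', g a := h1.symm
    _ ≤ ∑ a ∈ S', (1 + (g a - 1)) := Finset.sum_le_sum (fun a _ => by omega)
    _ = S'.card + ∑ a ∈ S', (g a - 1) := by
        rw [Finset.sum_add_distrib, Finset.sum_const, smul_eq_mul, mul_one]
    _ ≤ 1 + ∑ a ∈ S, (g a - 1) :=
        Nat.add_le_add hcard (Finset.sum_le_sum_of_subset hsub)

/-- for an abstract van Kampen 2-complex `Ỹ` with `k` abstract relators
(and no isolated edges), with `αᵢ` the number of geometric faces labeled by the abstract
relator `i` and `ηᵢ` the number of free-to-fill abstract letters of `i`, one has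
`∑ αᵢ ηᵢ ≤ |Ỹ⁽¹⁾| + Red(Ỹ)`, where `|Ỹ⁽¹⁾|` is the number of geometric edges and
`Red(Ỹ) = ∑_e ∑_i ∑_j (|{f : lab f = i, e is the j-th edge of ∂f}| - 1)⁺` is the
reduction degree (truncated subtraction on `ℕ` is the positive part). -/
theorem alpha_eta_le_edges_add_red
    [Fintype E] [Fintype F]
    (L : Fin k → ℕ) (lab : F → Fin k) (bd : F → ℕ → E)
    (hni : ∀ e : E, ∃ f : F, ∃ j < L (lab f), bd f j = e) :
    ∑ i : Fin k,
        Nat.card {f : F // lab f = i} * Nat.card {j : ℕ // FreeToFill L lab bd i j}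
      ≤ Fintype.card E +
        ∑ e : E, ∑ i : Fin k, ∑ j ∈ Finset.range (L i),
          (Nat.card {f : F // lab f = i ∧ bd f j = e} - 1) := by
  classical
  set N : E → Fin k → ℕ → ℕ := fun e i j => Nat.card {f : F // lab f = i ∧ bd f j = e}
    with hN
  set T : Fin k → Finset ℕ :=
    fun i => (range (L i)).filter (fun j => FreeToFill L lab bd i j) with hT
  have hNcard : ∀ e i j,
      N e i j = (univ.filter (fun f : F => lab f = i ∧ bd f j = e)).card := by
    intro e i j
    simp [hN, Nat.card_eq_fintype_card, Fintype.card_subtype]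
  -- α_i = ∑_e N e i j for any j
  have halpha : ∀ (i : Fin k) (j : ℕ),
      Nat.card {f : F // lab f = i} = ∑ e : E, N e i j := by
    intro i j
    rw [Nat.card_eq_fintype_card, Fintype.card_subtype]
    rw [Finset.card_eq_sum_card_fiberwise (f := fun f => bd f j) (t := univ)
      (fun x _ => mem_univ _)]
    refine Finset.sum_congr rfl (fun e _ => ?_)
    rw [hNcard, Finset.filter_filter]
  -- η_i as a Finset card
  have heta : ∀ i : Fin k,
      Nat.card {j : ℕ // FreeToFill L lab bd i j} = (T i).card := by
    intro i
    have hset : {j : ℕ | FreeToFill L lab bd i j} = ↑(T i) := by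
      ext j
      simp only [Set.mem_setOf_eq, hT, coe_filter, mem_range]
      exact ⟨fun h => ⟨h.1, h⟩, fun h => h.2⟩
    rw [show {j : ℕ // FreeToFill L lab bd i j} = ↥{j : ℕ | FreeToFill L lab bd i j}
      from rfl, Nat.card_coe_set_eq, hset, Set.ncard_coe_finset]
  -- per-edge inequality
  have key : ∀ e : E,
      ∑ i : Fin k, ∑ j ∈ T i, N e i j
        ≤ 1 + ∑ i : Fin k, ∑ j ∈ range (L i), (N e i j - 1) := by
    intro e
    have huniq : ∀ p ∈ (univ : Finset (Fin k)).sigma T,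
        ∀ q ∈ (univ : Finset (Fin k)).sigma T,
        0 < N e p.1 p.2 → 0 < N e q.1 q.2 → p = q := by
      rintro ⟨i, j⟩ hp ⟨i', j'⟩ hq hgp hgq
      simp only [mem_sigma, hT, mem_filter, mem_range] at hp hq
      obtain ⟨f, hf⟩ := (Nat.card_pos_iff.1 hgp).1
      obtain ⟨f', hf'⟩ := (Nat.card_pos_iff.1 hgq).1
      have hd : Decorates L lab bd e i j := ⟨hp.2.1, f, hf⟩
      have hd' : Decorates L lab bd e i' j' := ⟨hq.2.1, f', hf'⟩
      have h1 := hp.2.2.2 e hd i' j' hd'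
      have h2 := hq.2.2.2 e hd' i j hd
      simp only [lexLe] at h1 h2
      have hii : i = i' := Fin.ext (by omega)
      have hjj : j = j' := by omega
      subst hii; subst hjj; rfl
    have h1 := sum_le_one_add_sum_pred ((univ : Finset (Fin k)).sigma T)
      (fun p => N e p.1 p.2) huniq
    have hsub : (univ : Finset (Fin k)).sigma T ⊆
        (univ : Finset (Fin k)).sigma (fun i => range (L i)) := by
      rintro ⟨i, j⟩ hp
      simp only [mem_sigma, hT, mem_filter] at hp ⊢
      exact ⟨hp.1, hp.2.1⟩
    calc ∑ i : Fin k, ∑ j ∈ T i, N e i j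
        = ∑ p ∈ (univ : Finset (Fin k)).sigma T, N e p.1 p.2 :=
          Finset.sum_sigma' _ _ _
      _ ≤ 1 + ∑ p ∈ (univ : Finset (Fin k)).sigma T, (N e p.1 p.2 - 1) := h1
      _ ≤ 1 + ∑ p ∈ (univ : Finset (Fin k)).sigma (fun i => range (L i)),
            (N e p.1 p.2 - 1) :=
          Nat.add_le_add_left (Finset.sum_le_sum_of_subset hsub) 1
      _ = 1 + ∑ i : Fin k, ∑ j ∈ range (L i), (N e i j - 1) := by
          exact congrArg (1 + ·) (Finset.sum_sigma' _ _ (fun i j => N e i j - 1)).symm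
  calc ∑ i : Fin k,
        Nat.card {f : F // lab f = i} * Nat.card {j : ℕ // FreeToFill L lab bd i j}
      = ∑ i : Fin k, ∑ j ∈ T i, Nat.card {f : F // lab f = i} := by
        refine Finset.sum_congr rfl (fun i _ => ?_)
        rw [heta i, Finset.sum_const, smul_eq_mul, mul_comm]
    _ = ∑ i : Fin k, ∑ j ∈ T i, ∑ e : E, N e i j := by
        refine Finset.sum_congr rfl (fun i _ => Finset.sum_congr rfl (fun j _ => ?_))
        exact halpha i j
    _ = ∑ e : E, ∑ i : Fin k, ∑ j ∈ T i, N e i j := by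
        rw [Finset.sum_comm]
        exact Finset.sum_congr rfl (fun e _ => Finset.sum_comm.symm)
    _ ≤ ∑ e : E, (1 + ∑ i : Fin k, ∑ j ∈ range (L i), (N e i j - 1)) :=
        Finset.sum_le_sum (fun e _ => key e)
    _ = Fintype.card E +
        ∑ e : E, ∑ i : Fin k, ∑ j ∈ Finset.range (L i), (N e i j - 1) := by
        rw [Finset.sum_add_distrib, Finset.sum_const, smul_eq_mul, mul_one,
          Finset.card_univ]
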